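/- Let μ_x, μ_y > 0, L_{xx}, L_{yy} ≥ 0, L_{yx} > 0. Define θ̄₁ : [0,1] → ℝ by θ̄₁(β) = 1 − (β(L_{xx}+μ_x)μ_y)/(2L_{yx}²)(√(1 + 4μ_x L_{yx}²/(β μ_y (L_{xx}+μ_x)²)) − 1) and θ̄₂ : [0,1] → ℝ by θ̄₂(β) = 1 − ((1−β)²/8)(μ_y²/L_{yy}²)(√(1 + 16 L_{yy}²/((1−β)²μ_y²)) − 1), with θ̄₁(0) = θ̄₂(1) = 1 by continuous extension, and L_{yy} > 0. Then θ̄₁ is monotonically decreasing, θ̄₂ is monotonically increasing, θ̄₁(0) = 1 > θ̄₂(0), θ̄₂(1) = 1 > θ̄₁(1), and consequently there exists a unique β* ∈ (0,1) with θ̄₁(β*) = θ̄₂(β*), at which max{θ̄₁, θ̄₂} attains its minimum over βᵢ ∈ (0,1). -/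

import Mathlib

/-- The threshold `θ̄₁` as a function of `β`; at `β = 0` the formula continuously extends
to `1`, which agrees with Lean's division-by-zero convention. -/
noncomputable def thetaBar1 (μx μy Lxx Lyx : ℝ) (β : ℝ) : ℝ :=
  1 - β * (Lxx + μx) * μy / (2 * Lyx ^ 2) *
      (Real.sqrt (1 + 4 * μx * Lyx ^ 2 / (β * μy * (Lxx + μx) ^ 2)) - 1)

/-- The threshold `θ̄₂` as a function of `β`; at `β = 1` the formula continuously extends
to `1`, which agrees with Lean's division-by-zero convention. -/
noncomputable def thetaBar2 (μy Lyy : ℝ) (β : ℝ) : ℝ :=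
  1 - (1 - β) ^ 2 / 8 * (μy ^ 2 / Lyy ^ 2) *
      (Real.sqrt (1 + 16 * Lyy ^ 2 / ((1 - β) ^ 2 * μy ^ 2)) - 1)

lemma sqrt_lt_add_half {K a : ℝ} (hK : 0 < K) (ha : 0 ≤ a) :
    Real.sqrt (a^2 + K*a) < a + K/2 := by
  have h := Real.sqrt_lt_sqrt (by nlinarith : (0:ℝ) ≤ a^2 + K*a)
    (by nlinarith : a^2 + K*a < (a + K/2)^2)
  rwa [Real.sqrt_sq (by linarith)] at h

lemma gmono {K : ℝ} (hK : 0 < K) :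
    StrictMonoOn (fun x => Real.sqrt (x^2 + K*x) - x) (Set.Ici 0) := by
  intro a ha b hb hab
  simp only [Set.mem_Ici] at ha hb
  set sa := Real.sqrt (a^2 + K*a) with hsadef
  set sb := Real.sqrt (b^2 + K*b) with hsbdef
  have hsa2 : sa^2 = a^2 + K*a := Real.sq_sqrt (by nlinarith)
  have hsb2 : sb^2 = b^2 + K*b := Real.sq_sqrt (by nlinarith)
  have hsa0 : 0 ≤ sa := Real.sqrt_nonneg _
  have hsb0 : 0 < sb := Real.sqrt_pos.2 (by nlinarith)
  have h1 : sa < a + K/2 := sqrt_lt_add_half hK ha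
  have h2 : sb < b + K/2 := sqrt_lt_add_half hK (by linarith)
  have key : (sb - sa) * (sb + sa) = (b - a) * (a + b + K) := by
    linear_combination hsb2 - hsa2
  have hpos : 0 < sb + sa := by linarith
  have hprod : 0 < (b - a) * (a + b + K - (sb + sa)) :=
    mul_pos (sub_pos.2 hab) (by linarith)
  simp only
  nlinarith [key, hprod, hpos]

lemma gpos {K a : ℝ} (hK : 0 < K) (ha : 0 < a) :
    0 < Real.sqrt (a^2 + K*a) - a := by
  have := gmono hK (Set.self_mem_Ici (a := (0:ℝ))) (Set.mem_Ici.2 ha.le) ha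
  simpa using this

lemma thetaBar1_eq (μx μy Lxx Lyx : ℝ)
    (hμx : 0 < μx) (hμy : 0 < μy) (hLxx : 0 ≤ Lxx) (hLyx : 0 < Lyx)
    {β : ℝ} (hβ : 0 ≤ β) :
    thetaBar1 μx μy Lxx Lyx β
      = 1 - (Lxx + μx) * μy / (2 * Lyx ^ 2) *
          (Real.sqrt (β^2 + (4 * μx * Lyx ^ 2 / (μy * (Lxx + μx) ^ 2)) * β) - β) := by
  have hL : (0:ℝ) < Lxx + μx := by linarith
  rcases eq_or_lt_of_le hβ with h | h
  · simp [thetaBar1, ← h]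
  · have hs : Real.sqrt (β^2 + (4 * μx * Lyx ^ 2 / (μy * (Lxx + μx) ^ 2)) * β)
        = β * Real.sqrt (1 + 4 * μx * Lyx ^ 2 / (β * μy * (Lxx + μx) ^ 2)) := by
      rw [show β^2 + (4 * μx * Lyx ^ 2 / (μy * (Lxx + μx) ^ 2)) * β
          = β^2 * (1 + 4 * μx * Lyx ^ 2 / (β * μy * (Lxx + μx) ^ 2)) from by
        field_simp, Real.sqrt_mul (sq_nonneg β), Real.sqrt_sq h.le]
    unfold thetaBar1
    rw [hs]; ring

lemma thetaBar2_eq (μy Lyy : ℝ) (hμy : 0 < μy) (hLyy : 0 < Lyy) (β : ℝ) :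
    thetaBar2 μy Lyy β
      = 1 - 1/8 * (Real.sqrt (((1-β)^2 * μy^2 / Lyy^2)^2 + 16 * ((1-β)^2 * μy^2 / Lyy^2))
          - (1-β)^2 * μy^2 / Lyy^2) := by
  by_cases hb : β = 1
  · simp [thetaBar2, hb]
  · have h1 : (1:ℝ) - β ≠ 0 := sub_ne_zero.2 (Ne.symm hb)
    set s := (1-β)^2 * μy^2 / Lyy^2 with hsdef
    have hspos : 0 < s := by positivity
    have hs : Real.sqrt (s^2 + 16 * s)
        = s * Real.sqrt (1 + 16 * Lyy ^ 2 / ((1 - β) ^ 2 * μy ^ 2)) := by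
      rw [show s^2 + 16 * s = s^2 * (1 + 16 * Lyy ^ 2 / ((1 - β) ^ 2 * μy ^ 2)) from by
        rw [hsdef]; field_simp, Real.sqrt_mul (sq_nonneg s), Real.sqrt_sq hspos.le]
    unfold thetaBar2
    rw [hs]; rw [hsdef]; ring

/-- `θ̄₁` is decreasing, `θ̄₂` is increasing on `[0,1]`, with the stated
boundary values, so there is a unique crossing point `β* ∈ (0,1)`, at which
`max{θ̄₁, θ̄₂}` attains its minimum over `(0,1)`. -/
theorem theta_bar_crossing
    (μx μy Lxx Lyy Lyx : ℝ)
    (hμx : 0 < μx) (hμy : 0 < μy) (hLxx : 0 ≤ Lxx) (hLyy : 0 < Lyy) (hLyx : 0 < Lyx) :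
    StrictAntiOn (thetaBar1 μx μy Lxx Lyx) (Set.Icc 0 1) ∧
    StrictMonoOn (thetaBar2 μy Lyy) (Set.Icc 0 1) ∧
    thetaBar1 μx μy Lxx Lyx 0 = 1 ∧
    thetaBar2 μy Lyy 0 < 1 ∧
    thetaBar2 μy Lyy 1 = 1 ∧
    thetaBar1 μx μy Lxx Lyx 1 < 1 ∧
    (∃! b : ℝ, b ∈ Set.Ioo (0 : ℝ) 1 ∧ thetaBar1 μx μy Lxx Lyx b = thetaBar2 μy Lyy b) ∧
    (∀ b ∈ Set.Ioo (0 : ℝ) 1, thetaBar1 μx μy Lxx Lyx b = thetaBar2 μy Lyy b →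
      ∀ β ∈ Set.Ioo (0 : ℝ) 1,
        max (thetaBar1 μx μy Lxx Lyx b) (thetaBar2 μy Lyy b) ≤
          max (thetaBar1 μx μy Lxx Lyx β) (thetaBar2 μy Lyy β)) := by
  have hL : (0:ℝ) < Lxx + μx := by linarith
  set K : ℝ := 4 * μx * Lyx ^ 2 / (μy * (Lxx + μx) ^ 2) with hKdef
  have hK : 0 < K := by positivity
  set A : ℝ := (Lxx + μx) * μy / (2 * Lyx ^ 2) with hAdef
  have hA : 0 < A := by positivity
  set sfun : ℝ → ℝ := fun β => (1-β)^2 * μy^2 / Lyy^2 with hsfun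
  have hs_nonneg : ∀ β, 0 ≤ sfun β := fun β => by positivity
  have hs_anti : ∀ ⦃b1 : ℝ⦄, b1 ∈ Set.Icc (0:ℝ) 1 → ∀ ⦃b2 : ℝ⦄, b2 ∈ Set.Icc (0:ℝ) 1 →
      b1 < b2 → sfun b2 < sfun b1 := by
    intro b1 h1 b2 h2 hlt
    simp only [Set.mem_Icc] at h1 h2
    have : (1 - b2)^2 < (1 - b1)^2 := by nlinarith
    have hc : 0 < μy^2 / Lyy^2 := by positivity
    simp only [hsfun, mul_div_assoc]
    exact mul_lt_mul_of_pos_right this hc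
  -- monotonicity of thetaBar1
  have hanti : StrictAntiOn (thetaBar1 μx μy Lxx Lyx) (Set.Icc 0 1) := by
    intro a ha b hb hab
    simp only [Set.mem_Icc] at ha hb
    rw [thetaBar1_eq μx μy Lxx Lyx hμx hμy hLxx hLyx ha.1,
        thetaBar1_eq μx μy Lxx Lyx hμx hμy hLxx hLyx hb.1, ← hKdef, ← hAdef]
    have := gmono hK (Set.mem_Ici.2 ha.1) (Set.mem_Ici.2 hb.1) hab
    simp only at this
    have := mul_lt_mul_of_pos_left this hA
    linarith
  -- monotonicity of thetaBar2
  have hmono : StrictMonoOn (thetaBar2 μy Lyy) (Set.Icc 0 1) := by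
    intro a ha b hb hab
    rw [thetaBar2_eq μy Lyy hμy hLyy a, thetaBar2_eq μy Lyy hμy hLyy b]
    have hsab : sfun b < sfun a := hs_anti ha hb hab
    have := gmono (show (0:ℝ) < 16 by norm_num)
      (Set.mem_Ici.2 (hs_nonneg b)) (Set.mem_Ici.2 (hs_nonneg a)) hsab
    simp only [hsfun] at this
    linarith
  -- boundary values
  have hb1 : thetaBar1 μx μy Lxx Lyx 0 = 1 := by
    rw [thetaBar1_eq μx μy Lxx Lyx hμx hμy hLxx hLyx le_rfl]
    norm_num
  have hb2 : thetaBar2 μy Lyy 0 < 1 := by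
    rw [thetaBar2_eq μy Lyy hμy hLyy 0]
    have hs0 : (0:ℝ) < (1-(0:ℝ))^2 * μy^2 / Lyy^2 := by positivity
    have := gpos (show (0:ℝ) < 16 by norm_num) hs0
    nlinarith
  have hb3 : thetaBar2 μy Lyy 1 = 1 := by
    rw [thetaBar2_eq μy Lyy hμy hLyy 1]
    norm_num
  have hb4 : thetaBar1 μx μy Lxx Lyx 1 < 1 := by
    rw [thetaBar1_eq μx μy Lxx Lyx hμx hμy hLxx hLyx zero_le_one, ← hKdef, ← hAdef]
    have := gpos hK one_pos
    nlinarith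
  -- continuity of the difference
  set f : ℝ → ℝ := fun β => thetaBar1 μx μy Lxx Lyx β - thetaBar2 μy Lyy β with hfdef
  set g : ℝ → ℝ := fun β =>
      (1 - A * (Real.sqrt (β^2 + K*β) - β)) -
      (1 - 1/8 * (Real.sqrt ((sfun β)^2 + 16 * (sfun β)) - sfun β)) with hgdef
  have hsc : Continuous sfun := by
    simp only [hsfun]
    exact (((continuous_const.sub continuous_id).pow 2).mul continuous_const).div_const _
  have hc1 : Continuous fun β : ℝ => Real.sqrt (β^2 + K*β) - β :=
    (Real.continuous_sqrt.comp
      ((continuous_pow 2).add (continuous_const.mul continuous_id))).sub continuous_id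
  have hc2 : Continuous fun β : ℝ => Real.sqrt ((sfun β)^2 + 16 * sfun β) - sfun β :=
    (Real.continuous_sqrt.comp ((hsc.pow 2).add (continuous_const.mul hsc))).sub hsc
  have hcontg : Continuous g :=
    (continuous_const.sub (continuous_const.mul hc1)).sub
      (continuous_const.sub (continuous_const.mul hc2))
  have heqon : Set.EqOn f g (Set.Icc 0 1) := by
    intro x hx
    simp only [Set.mem_Icc] at hx
    simp only [hfdef, hgdef]
    rw [thetaBar1_eq μx μy Lxx Lyx hμx hμy hLxx hLyx hx.1, thetaBar2_eq μy Lyy hμy hLyy x,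
      hKdef, hAdef]
  have hcontf : ContinuousOn f (Set.Icc 0 1) :=
    (hcontg.continuousOn).congr heqon
  have hf0 : 0 < f 0 := by simp only [hfdef]; rw [hb1]; linarith
  have hf1 : f 1 < 0 := by simp only [hfdef]; rw [hb3]; linarith
  -- existence of crossing
  have hmem : (0:ℝ) ∈ Set.Ioo (f 1) (f 0) := ⟨hf1, hf0⟩
  have hsub := intermediate_value_Ioo' (zero_le_one) hcontf
  obtain ⟨b, hbmem, hbval⟩ := hsub hmem
  have hcross : thetaBar1 μx μy Lxx Lyx b = thetaBar2 μy Lyy b := by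
    have : f b = 0 := hbval
    simp only [hfdef] at this; linarith
  refine ⟨hanti, hmono, hb1, hb2, hb3, hb4, ⟨b, ⟨hbmem, hcross⟩, ?_⟩, ?_⟩
  · -- uniqueness
    rintro b' ⟨hb'mem, hb'cross⟩
    by_contra hne
    have hmem1 : b' ∈ Set.Icc (0:ℝ) 1 := Set.Ioo_subset_Icc_self hb'mem
    have hmem2 : b ∈ Set.Icc (0:ℝ) 1 := Set.Ioo_subset_Icc_self hbmem
    rcases lt_or_gt_of_ne hne with h | h
    · have h1 := hanti hmem1 hmem2 h
      have h2 := hmono hmem1 hmem2 h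
      rw [hb'cross, hcross] at h1; linarith
    · have h1 := hanti hmem2 hmem1 h
      have h2 := hmono hmem2 hmem1 h
      rw [hb'cross, hcross] at h1; linarith
  · -- minimality of max at the crossing
    intro c hc hceq β hβ
    have hcI : c ∈ Set.Icc (0:ℝ) 1 := Set.Ioo_subset_Icc_self hc
    have hβI : β ∈ Set.Icc (0:ℝ) 1 := Set.Ioo_subset_Icc_self hβ
    have hm : max (thetaBar1 μx μy Lxx Lyx c) (thetaBar2 μy Lyy c) = thetaBar2 μy Lyy c := by
      rw [hceq]; exact max_self _
    rcases le_total β c with h | h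
    · have h1 : thetaBar1 μx μy Lxx Lyx c ≤ thetaBar1 μx μy Lxx Lyx β := by
        rcases eq_or_lt_of_le h with rfl | h
        · exact le_rfl
        · exact (hanti hβI hcI h).le
      rw [hm, ← hceq]
      exact le_trans h1 (le_max_left _ _)
    · have h2 : thetaBar2 μy Lyy c ≤ thetaBar2 μy Lyy β := by
        rcases eq_or_lt_of_le h with rfl | h
        · exact le_rfl
        · exact (hmono hcI hβI h).le
      rw [hm]
      exact le_trans h2 (le_max_right _ _)
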